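/- arXiv:1805.03289 — 6 statements merged into one kernel-verified Lean document; each statement's English description precedes it below -/
import Mathlib

section
/- If χ : ℝ^N → ℝ is a norm invariant under permutation of coordinates and λ, λ' ∈ C satisfy λ ⪯ λ' (λ is majorized by λ'), then χ(λ) ≤ χ(λ'). -/
open Finset

/-- Key induction: one T-transform step at a time. `l` is fixed antitone; `l'` only needs to
prefix-dominate `l` with equal total sum. Induction on the number of coordinates where they
differ. -/
private lemma key_aux (N : ℕ) (χ : (Fin N → ℝ) → ℝ)
    (hadd : ∀ x y, χ (x + y) ≤ χ x + χ y)
    (hhom : ∀ (c : ℝ) (x), χ (c • x) = |c| * χ x)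
    (hsym : ∀ (σ : Equiv.Perm (Fin N)) (x), χ (x ∘ σ) = χ x)
    (l : Fin N → ℝ) (hl : Antitone l) :
    ∀ (n : ℕ) (l' : Fin N → ℝ),
      (∀ k : ℕ, k ≤ N →
        ∑ i ∈ Finset.univ.filter (fun i : Fin N => (i : ℕ) < k), l i ≤
          ∑ i ∈ Finset.univ.filter (fun i : Fin N => (i : ℕ) < k), l' i) →
      (∑ i, l i = ∑ i, l' i) →
      (Finset.univ.filter (fun m : Fin N => l m ≠ l' m)).card ≤ n →
      χ l ≤ χ l' := by
  intro n
  induction n with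
  | zero =>
    intro l' _ _ hcard
    have : l = l' := by
      funext m
      by_contra h
      have hm : m ∈ Finset.univ.filter (fun m : Fin N => l m ≠ l' m) := by
        simp [h]
      have := Finset.card_pos.2 ⟨m, hm⟩
      omega
    rw [this]
  | succ n ih =>
    intro l' hpre hsum hcard
    set S := Finset.univ.filter (fun m : Fin N => l m ≠ l' m) with hSdef
    by_cases hS : S.Nonempty
    · -- i : minimal differing index
      set i := S.min' hS with hidef
      have hiS : i ∈ S := S.min'_mem hS
      have hine : l i ≠ l' i := by simpa [hSdef] using hiS
      -- below i everything agrees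
      have hbelow : ∀ m : Fin N, m < i → l m = l' m := by
        intro m hm
        by_contra h
        have : i ≤ m := S.min'_le m (by simp [hSdef, h])
        exact absurd hm (not_lt.2 this)
      -- l i < l' i from prefix sums up to i+1
      have hlt : l i < l' i := by
        rcases hine.lt_or_gt with h | h
        · exact h
        · exfalso
          have hk := hpre ((i : ℕ) + 1) i.isLt
          have : ∑ m ∈ Finset.univ.filter (fun m : Fin N => (m : ℕ) < (i : ℕ) + 1), l' m
              < ∑ m ∈ Finset.univ.filter (fun m : Fin N => (m : ℕ) < (i : ℕ) + 1), l m := by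
            apply Finset.sum_lt_sum
            · intro m hm
              simp only [Finset.mem_filter] at hm
              rcases lt_trichotomy m i with hmi | hmi | hmi
              · exact (hbelow m hmi).ge
              · subst hmi; exact h.le
              · exfalso
                have : (i : ℕ) < (m : ℕ) := hmi
                omega
            · exact ⟨i, by simp, h⟩
          linarith
      -- T : indices above i where l' < l ; nonempty because total sums agree
      set T := Finset.univ.filter (fun m : Fin N => i < m ∧ l' m < l m) with hTdef
      have hT : T.Nonempty := by
        by_contra hTe
        have hge : ∀ m : Fin N, i < m → l m ≤ l' m := by
          intro m hm
          by_contra h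
          exact hTe ⟨m, by simp [hTdef, hm, lt_of_not_ge h]⟩
        have : ∑ m, l m < ∑ m, l' m := by
          apply Finset.sum_lt_sum
          · intro m _
            rcases lt_trichotomy m i with hmi | hmi | hmi
            · exact (hbelow m hmi).le
            · subst hmi; exact hlt.le
            · exact hge m hmi
          · exact ⟨i, by simp, hlt⟩
        linarith [hsum]
      set j := T.min' hT with hjdef
      have hjT : j ∈ T := T.min'_mem hT
      have hij : i < j := by
        have := hjT; simp only [hTdef, Finset.mem_filter] at this; exact this.2.1
      have hjlt : l' j < l j := by
        have := hjT; simp only [hTdef, Finset.mem_filter] at this; exact this.2.2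
      -- between i and j: l ≤ l'
      have hmid : ∀ m : Fin N, i < m → m < j → l m ≤ l' m := by
        intro m h1 h2
        by_contra h
        have : j ≤ m := T.min'_le m (by simp [hTdef, h1, lt_of_not_ge h])
        exact absurd h2 (not_lt.2 this)
      set δ := min (l' i - l i) (l j - l' j) with hδdef
      have hδpos : 0 < δ := lt_min (by linarith) (by linarith)
      have hδ1 : δ ≤ l' i - l i := min_le_left _ _
      have hδ2 : δ ≤ l j - l' j := min_le_right _ _
      have hline : l j ≤ l i := hl hij.le
      have hd : 0 < l' i - l' j := by linarith
      -- the perturbation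
      set e : Fin N → ℝ := fun m => (if m = j then δ else 0) + (if m = i then -δ else 0)
        with hedef
      set l'' := l' + e with hl''def
      have hji : j ≠ i := ne_of_gt hij
      have hl''i : l'' i = l' i - δ := by
        simp [hl''def, hedef, hji.symm]
        ring
      have hl''j : l'' j = l' j + δ := by
        simp [hl''def, hedef, hji]
      have hl''other : ∀ m : Fin N, m ≠ i → m ≠ j → l'' m = l' m := by
        intro m h1 h2
        simp [hl''def, hedef, h1, h2]
      -- step 1 : χ l'' ≤ χ l'
      have hstep : χ l'' ≤ χ l' := by
        set t := δ / (l' i - l' j) with htdef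
        have ht0 : 0 < t := div_pos hδpos hd
        have ht1 : t ≤ 1 := by
          rw [htdef, div_le_one hd]
          linarith
        have htδ : t * (l' i - l' j) = δ := by
          rw [htdef]
          field_simp [hd.ne']
        have hcomb : l'' = (1 - t) • l' + t • (l' ∘ (Equiv.swap i j)) := by
          funext m
          simp only [hl''def, hedef, Pi.add_apply, Pi.smul_apply, Function.comp_apply,
            smul_eq_mul]
          rcases eq_or_ne m i with rfl | hmi
          · rw [Equiv.swap_apply_left]
            simp [hji.symm]
            linarith
          · rcases eq_or_ne m j with rfl | hmj
            · rw [Equiv.swap_apply_right]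
              simp [hji]
              linarith
            · rw [Equiv.swap_apply_of_ne_of_ne hmi hmj]
              simp [hmi, hmj]
              ring
        rw [hcomb]
        calc χ ((1 - t) • l' + t • (l' ∘ (Equiv.swap i j)))
            ≤ χ ((1 - t) • l') + χ (t • (l' ∘ (Equiv.swap i j))) := hadd _ _
          _ = |1 - t| * χ l' + |t| * χ (l' ∘ (Equiv.swap i j)) := by rw [hhom, hhom]
          _ = (1 - t) * χ l' + t * χ l' := by
              rw [hsym (Equiv.swap i j) l', abs_of_nonneg (by linarith),
                abs_of_nonneg ht0.le]
          _ = χ l' := by ring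
      -- prefix sums of e
      have hesum : ∀ s : Finset (Fin N),
          ∑ m ∈ s, e m = (if j ∈ s then δ else 0) + (if i ∈ s then -δ else 0) := by
        intro s
        simp only [hedef, Finset.sum_add_distrib, Finset.sum_ite_eq' s]
      -- step 2 : prefix sums for l''
      have hpre'' : ∀ k : ℕ, k ≤ N →
          ∑ m ∈ Finset.univ.filter (fun m : Fin N => (m : ℕ) < k), l m ≤
            ∑ m ∈ Finset.univ.filter (fun m : Fin N => (m : ℕ) < k), l'' m := by
        intro k hk
        have hsplit : ∑ m ∈ Finset.univ.filter (fun m : Fin N => (m : ℕ) < k), l'' m =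
            (∑ m ∈ Finset.univ.filter (fun m : Fin N => (m : ℕ) < k), l' m) +
            ((if (j : ℕ) < k then δ else 0) + (if (i : ℕ) < k then -δ else 0)) := by
          simp only [hl''def, Pi.add_apply, Finset.sum_add_distrib]
          rw [hesum]
          congr 2 <;> simp
        rw [hsplit]
        by_cases hjk : (j : ℕ) < k
        · have hik : (i : ℕ) < k := lt_trans hij hjk
          simpa [hjk, hik] using hpre k hk
        · by_cases hik : (i : ℕ) < k
          · -- need δ ≤ prefix (l' - l)
            simp only [hjk, hik, if_true, if_false]
            have hkey : δ ≤ ∑ m ∈ Finset.univ.filter (fun m : Fin N => (m : ℕ) < k),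
                (l' m - l m) := by
              have hbound : ∑ m ∈ Finset.univ.filter (fun m : Fin N => (m : ℕ) < k),
                  (if m = i then δ else 0) ≤
                  ∑ m ∈ Finset.univ.filter (fun m : Fin N => (m : ℕ) < k), (l' m - l m) := by
                apply Finset.sum_le_sum
                intro m hm
                simp only [Finset.mem_filter] at hm
                rcases eq_or_ne m i with rfl | hmi
                · simpa using hδ1
                · simp only [hmi, if_false]
                  rcases lt_trichotomy m i with h1 | h1 | h1
                  · linarith [hbelow m h1]
                  · exact absurd h1 hmi
                  · have hmj : m < j := by
                      have : (m : ℕ) < (j : ℕ) := lt_of_lt_of_le hm.2 (not_lt.1 hjk)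
                      exact this
                    linarith [hmid m h1 hmj]
              rwa [Finset.sum_ite_eq' _ i, if_pos (by simp [hik])] at hbound
            rw [Finset.sum_sub_distrib] at hkey
            linarith
          · simp [hjk, hik, hpre k hk]
      -- step 3 : total sum for l''
      have hsum'' : ∑ m, l m = ∑ m, l'' m := by
        simp only [hl''def, Pi.add_apply, Finset.sum_add_distrib, hesum]
        simp [hsum]
      -- step 4 : cardinality decreases
      have hcard'' : (Finset.univ.filter (fun m : Fin N => l m ≠ l'' m)).card ≤ n := by
        have hjS : j ∈ S := by simp [hSdef, hjlt.ne']
        rcases min_cases (l' i - l i) (l j - l' j) with ⟨hmin, _⟩ | ⟨hmin, _⟩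
        · -- δ = l' i - l i, so l'' i = l i
          have hfix : l'' i = l i := by rw [hl''i, hδdef, hmin]; ring
          have hsub : Finset.univ.filter (fun m : Fin N => l m ≠ l'' m) ⊆ S.erase i := by
            intro m hm
            simp only [Finset.mem_filter, Finset.mem_univ, true_and] at hm
            have hmi : m ≠ i := by rintro rfl; exact hm hfix.symm
            rcases eq_or_ne m j with rfl | hmj
            · exact Finset.mem_erase.2 ⟨hmi, hjS⟩
            · refine Finset.mem_erase.2 ⟨hmi, ?_⟩
              simp only [hSdef, Finset.mem_filter, Finset.mem_univ, true_and]
              rw [← hl''other m hmi hmj]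
              exact hm
          have := Finset.card_le_card hsub
          rw [Finset.card_erase_of_mem hiS] at this
          omega
        · -- δ = l j - l' j, so l'' j = l j
          have hfix : l'' j = l j := by rw [hl''j, hδdef, hmin]; ring
          have hsub : Finset.univ.filter (fun m : Fin N => l m ≠ l'' m) ⊆ S.erase j := by
            intro m hm
            simp only [Finset.mem_filter, Finset.mem_univ, true_and] at hm
            have hmj : m ≠ j := by rintro rfl; exact hm hfix.symm
            rcases eq_or_ne m i with rfl | hmi
            · exact Finset.mem_erase.2 ⟨hmj, hiS⟩
            · refine Finset.mem_erase.2 ⟨hmj, ?_⟩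
              simp only [hSdef, Finset.mem_filter, Finset.mem_univ, true_and]
              rw [← hl''other m hmi hmj]
              exact hm
          have := Finset.card_le_card hsub
          rw [Finset.card_erase_of_mem hjS] at this
          omega
      exact le_trans (ih l'' hpre'' hsum'' hcard'') hstep
    · -- S empty : l = l'
      have : l = l' := by
        funext m
        by_contra h
        exact hS ⟨m, by simp [hSdef, h]⟩
      rw [this]

/-- A symmetric norm is monotone with respect to majorization. -/
theorem symmetric_norm_mono_of_majorize
    (N : ℕ) (χ : (Fin N → ℝ) → ℝ)
    (hadd : ∀ x y, χ (x + y) ≤ χ x + χ y)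
    (hhom : ∀ (c : ℝ) (x), χ (c • x) = |c| * χ x)
    (hdef : ∀ x, χ x = 0 → x = 0)
    (hsym : ∀ (σ : Equiv.Perm (Fin N)) (x), χ (x ∘ σ) = χ x)
    (l l' : Fin N → ℝ) (hl : Antitone l) (hl' : Antitone l')
    (hmaj : (∀ k : ℕ, k ≤ N →
        ∑ i ∈ Finset.univ.filter (fun i : Fin N => (i : ℕ) < k), l i ≤
          ∑ i ∈ Finset.univ.filter (fun i : Fin N => (i : ℕ) < k), l' i) ∧
      ∑ i, l i = ∑ i, l' i) :
    χ l ≤ χ l' := by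
  exact key_aux N χ hadd hhom hsym l hl N l' hmaj.1 hmaj.2
    (le_trans (Finset.card_filter_le _ _) (by simp))
end

section
/- For Hermitian matrices h, h' of size N and any symmetric norm χ on ℝ^N, χ of the eigenvalue vector of h + h' is at most χ of the eigenvalue vector of h plus χ of the eigenvalue vector of h' (eigenvalues listed in decreasing order). -/
open Finset Matrix

section Aux

variable {N : ℕ}

/-- Prefix sum of the first `m` coordinates. -/
private def pSum (x : Fin N → ℝ) (m : ℕ) : ℝ :=
  ∑ i ∈ Finset.univ.filter (fun i : Fin N => (i : ℕ) < m), x i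

private lemma pSum_total (x : Fin N → ℝ) : pSum x N = ∑ i, x i := by
  unfold pSum
  rw [Finset.filter_true_of_mem (fun i _ => i.isLt)]

private lemma pSum_add (x y : Fin N → ℝ) (m : ℕ) :
    pSum (x + y) m = pSum x m + pSum y m := by
  unfold pSum; rw [← Finset.sum_add_distrib]; rfl

private lemma pSum_split (x : Fin N → ℝ) {m₁ m₂ : ℕ} (h : m₁ ≤ m₂) :
    pSum x m₂ = pSum x m₁
      + ∑ i ∈ Finset.univ.filter (fun i : Fin N => m₁ ≤ (i : ℕ) ∧ (i : ℕ) < m₂), x i := by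
  unfold pSum
  rw [← Finset.sum_filter_add_sum_filter_not
    (Finset.univ.filter (fun i : Fin N => (i : ℕ) < m₂)) (fun i => (i : ℕ) < m₁)]
  congr 1
  · congr 1
    rw [Finset.filter_filter]
    apply Finset.filter_congr
    intro i _
    constructor
    · rintro ⟨_, h1⟩; exact h1
    · intro h1; exact ⟨lt_of_lt_of_le h1 h, h1⟩
  · congr 1
    rw [Finset.filter_filter]
    apply Finset.filter_congr
    intro i _
    omega

private lemma pSum_succ (x : Fin N → ℝ) (j : Fin N) :
    pSum x ((j : ℕ) + 1) = pSum x j + x j := by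
  rw [pSum_split x (Nat.le_succ j)]
  congr 1
  rw [show Finset.univ.filter (fun i : Fin N => (j:ℕ) ≤ (i:ℕ) ∧ (i:ℕ) < (j:ℕ)+1) = {j} from ?_,
    Finset.sum_singleton]
  ext i
  simp [Fin.ext_iff]
  omega

private lemma card_filter_lt (m : ℕ) (hm : m ≤ N) :
    (Finset.univ.filter (fun i : Fin N => (i : ℕ) < m)).card = m := by
  rw [← Finset.card_image_of_injective _ Fin.val_injective]
  rw [show (Finset.univ.filter (fun i : Fin N => (i : ℕ) < m)).image Fin.val
      = Finset.range m from ?_, Finset.card_range]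
  ext a
  simp only [Finset.mem_image, Finset.mem_filter, Finset.mem_univ, true_and, Finset.mem_range]
  constructor
  · rintro ⟨i, hi, rfl⟩; exact hi
  · intro ha; exact ⟨⟨a, lt_of_lt_of_le ha hm⟩, ha, rfl⟩

/-- Abstract lemma: antitone μ, coefficients in [0,1] summing to k. -/
private lemma sum_mul_le_pSum {μ c : Fin N → ℝ} (hμ : Antitone μ)
    (hc0 : ∀ j, 0 ≤ c j) (hc1 : ∀ j, c j ≤ 1) {k : ℕ} (hk : k ≤ N)
    (hcs : ∑ j, c j = (k : ℝ)) :
    ∑ j, μ j * c j ≤ pSum μ k := by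
  rcases eq_or_lt_of_le hk with rfl | hkN
  · have hone : ∀ j, c j = 1 := by
      by_contra hne
      push_neg at hne
      obtain ⟨j, hj⟩ := hne
      have hlt := Finset.sum_lt_sum (f := c) (g := fun _ => (1 : ℝ))
        (fun i _ => hc1 i) ⟨j, Finset.mem_univ j, lt_of_le_of_ne (hc1 j) hj⟩
      rw [hcs, Finset.sum_const, Finset.card_univ, Fintype.card_fin, nsmul_eq_mul,
        mul_one] at hlt
      exact lt_irrefl _ hlt
    rw [pSum_total]
    apply le_of_eq
    exact Finset.sum_congr rfl (fun j _ => by rw [hone j, mul_one])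
  · set b := μ ⟨k, hkN⟩ with hb
    have split : ∀ j : Fin N, (if (j:ℕ) < k then μ j + b * (c j - 1) else b * c j)
        = b * c j + (if (j:ℕ) < k then μ j - b else 0) := by
      intro j; split <;> ring
    have hle : ∀ j : Fin N,
        μ j * c j ≤ (if (j:ℕ) < k then μ j + b * (c j - 1) else b * c j) := by
      intro j
      by_cases hj : (j:ℕ) < k
      · have hjb : b ≤ μ j := hμ (show j ≤ ⟨k, hkN⟩ from Nat.le_of_lt hj)
        simp only [hj, if_true]
        nlinarith [hc1 j]
      · have hjb : μ j ≤ b := hμ (show (⟨k, hkN⟩ : Fin N) ≤ j from Nat.le_of_not_lt hj)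
        simp only [hj, if_false]
        nlinarith [hc0 j]
    calc ∑ j, μ j * c j
        ≤ ∑ j : Fin N, (if (j:ℕ) < k then μ j + b * (c j - 1) else b * c j) :=
          Finset.sum_le_sum (fun j _ => hle j)
      _ = ∑ j : Fin N, b * c j + ∑ j : Fin N, (if (j:ℕ) < k then μ j - b else 0) := by
          rw [← Finset.sum_add_distrib]
          exact Finset.sum_congr rfl (fun j _ => split j)
      _ = b * k + (pSum μ k - b * k) := by
          rw [← Finset.mul_sum, hcs, ← Finset.sum_filter]
          unfold pSum
          rw [Finset.sum_sub_distrib, Finset.sum_const,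
            card_filter_lt k (le_of_lt hkN), nsmul_eq_mul]
          ring
      _ = pSum μ k := by ring

private lemma toEuclideanLin_eigenvector {N : ℕ} {A : Matrix (Fin N) (Fin N) ℂ}
    (hA : A.IsHermitian) (j : Fin N) :
    Matrix.toEuclideanLin A (hA.eigenvectorBasis j)
      = (hA.eigenvalues j : ℂ) • hA.eigenvectorBasis j := by
  apply (WithLp.equiv 2 _).injective
  rw [WithLp.equiv_apply, Matrix.ofLp_toEuclideanLin_apply]
  show A *ᵥ ⇑(hA.eigenvectorBasis j) = (hA.eigenvalues j : ℂ) • ⇑(hA.eigenvectorBasis j)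
  rw [hA.mulVec_eigenvectorBasis j, RCLike.real_smul_eq_coe_smul (K := ℂ)]
  rfl

private lemma re_inner_expand {N : ℕ} {A : Matrix (Fin N) (Fin N) ℂ}
    (hA : A.IsHermitian) (x : EuclideanSpace ℂ (Fin N)) :
    (inner ℂ x (Matrix.toEuclideanLin A x) : ℂ).re
      = ∑ j, hA.eigenvalues j * ‖(inner ℂ (hA.eigenvectorBasis j) x : ℂ)‖ ^ 2 := by
  have hsymm : (Matrix.toEuclideanLin A).IsSymmetric :=
    (Matrix.isHermitian_iff_isSymmetric).1 hA
  have h1 : (inner ℂ x (Matrix.toEuclideanLin A x) : ℂ)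
      = ∑ j, ((hA.eigenvalues j * ‖(inner ℂ (hA.eigenvectorBasis j) x : ℂ)‖ ^ 2 : ℝ) : ℂ) := by
    rw [← (hA.eigenvectorBasis).sum_inner_mul_inner x (Matrix.toEuclideanLin A x)]
    refine Finset.sum_congr rfl fun j _ => ?_
    have h2 : (inner ℂ (hA.eigenvectorBasis j) (Matrix.toEuclideanLin A x) : ℂ)
        = (hA.eigenvalues j : ℂ) * inner ℂ (hA.eigenvectorBasis j) x := by
      rw [← hsymm (hA.eigenvectorBasis j) x, toEuclideanLin_eigenvector hA j,
        inner_smul_left, Complex.conj_ofReal]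
    have hz := Complex.conj_mul' (inner ℂ (hA.eigenvectorBasis j) x : ℂ)
    rw [h2, ← inner_conj_symm x (hA.eigenvectorBasis j)]
    push_cast at hz ⊢
    linear_combination (hA.eigenvalues j : ℂ) * hz
  rw [h1, Complex.re_sum]
  exact Finset.sum_congr rfl fun j _ => Complex.ofReal_re _

private lemma sum_norm_inner_basis {N : ℕ}
    (b : OrthonormalBasis (Fin N) ℂ (EuclideanSpace ℂ (Fin N)))
    (x : EuclideanSpace ℂ (Fin N)) :
    ∑ j, ‖(inner ℂ (b j) x : ℂ)‖ ^ 2 = ‖x‖ ^ 2 := by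
  have h := b.sum_inner_mul_inner x x
  have h2 : ∀ j, (inner ℂ x (b j) : ℂ) * inner ℂ (b j) x
      = ((‖(inner ℂ (b j) x : ℂ)‖ ^ 2 : ℝ) : ℂ) := by
    intro j
    rw [← inner_conj_symm x (b j), Complex.conj_mul']
    norm_cast
  rw [Finset.sum_congr rfl (fun j _ => h2 j), inner_self_eq_norm_sq_to_K] at h
  have h4 := congrArg Complex.re h
  simpa [Complex.re_sum, ← Complex.ofReal_pow, Complex.ofReal_re] using h4

private lemma sum_re_inner_le {N : ℕ} {A : Matrix (Fin N) (Fin N) ℂ}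
    (hA : A.IsHermitian) {μ : Fin N → ℝ} (hμa : Antitone μ)
    (σ : Equiv.Perm (Fin N)) (hσ : μ = hA.eigenvalues ∘ σ)
    {ι : Type*} [Fintype ι] (v : ι → EuclideanSpace ℂ (Fin N))
    (hv : Orthonormal ℂ v) (hcard : Fintype.card ι ≤ N) :
    ∑ i, (inner ℂ (v i) (Matrix.toEuclideanLin A (v i)) : ℂ).re
      ≤ pSum μ (Fintype.card ι) := by
  set b := hA.eigenvectorBasis with hbdef
  set c : Fin N → ℝ := fun j => ∑ i, ‖(inner ℂ (b j) (v i) : ℂ)‖ ^ 2 with hc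
  have hstep : ∑ i, (inner ℂ (v i) (Matrix.toEuclideanLin A (v i)) : ℂ).re
      = ∑ j, hA.eigenvalues j * c j := by
    simp_rw [re_inner_expand hA]
    rw [Finset.sum_comm]
    exact Finset.sum_congr rfl fun j _ => by rw [hc, Finset.mul_sum]
  have hc0 : ∀ j, 0 ≤ c j := fun j =>
    Finset.sum_nonneg fun i _ => sq_nonneg _
  have hc1 : ∀ j, c j ≤ 1 := by
    intro j
    have hb1 : ‖b j‖ = 1 := b.orthonormal.1 j
    have := hv.sum_inner_products_le (s := Finset.univ) (b j)
    rw [hb1, one_pow] at this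
    refine le_trans (le_of_eq ?_) this
    exact Finset.sum_congr rfl fun i _ => by rw [norm_inner_symm]
  have hcs : ∑ j, c j = (Fintype.card ι : ℝ) := by
    rw [hc, Finset.sum_comm]
    have : ∀ i : ι, ∑ j, ‖(inner ℂ (b j) (v i) : ℂ)‖ ^ 2 = 1 := by
      intro i
      rw [sum_norm_inner_basis b (v i), hv.1 i, one_pow]
    rw [Finset.sum_congr rfl (fun i _ => this i), Finset.sum_const, Finset.card_univ,
      nsmul_eq_mul, mul_one]
  have hperm : ∑ j, hA.eigenvalues j * c j = ∑ j, μ j * c (σ j) := by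
    rw [hσ]
    exact (Equiv.sum_comp σ (fun j => hA.eigenvalues j * c j)).symm
  rw [hstep, hperm]
  exact sum_mul_le_pSum hμa (fun j => hc0 (σ j)) (fun j => hc1 (σ j)) hcard
    (by rw [Equiv.sum_comp σ c, hcs])

private lemma re_inner_eigenvector {N : ℕ} {A : Matrix (Fin N) (Fin N) ℂ}
    (hA : A.IsHermitian) (j : Fin N) :
    (inner ℂ (hA.eigenvectorBasis j) (Matrix.toEuclideanLin A (hA.eigenvectorBasis j)) : ℂ).re
      = hA.eigenvalues j := by
  rw [toEuclideanLin_eigenvector hA j, inner_smul_right]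
  have h1 : (inner ℂ (hA.eigenvectorBasis j) (hA.eigenvectorBasis j) : ℂ) = 1 := by
    rw [inner_self_eq_norm_sq_to_K, hA.eigenvectorBasis.orthonormal.1 j]
    norm_num
  rw [h1, mul_one, Complex.ofReal_re]

private lemma kyfan_ineq {N : ℕ} {h h' : Matrix (Fin N) (Fin N) ℂ}
    (hh : h.IsHermitian) (hh' : h'.IsHermitian) (hhh : (h + h').IsHermitian)
    {μ μ' μ'' : Fin N → ℝ} (hμa : Antitone μ) (hμ'a : Antitone μ')
    (σ σ' σ'' : Equiv.Perm (Fin N))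
    (hσ : μ = hh.eigenvalues ∘ σ) (hσ' : μ' = hh'.eigenvalues ∘ σ')
    (hσ'' : μ'' = hhh.eigenvalues ∘ σ'') {m : ℕ} (hm : m ≤ N) :
    pSum μ'' m ≤ pSum μ m + pSum μ' m := by
  classical
  set F := Finset.univ.filter (fun i : Fin N => (i : ℕ) < m) with hF
  have hcard : Fintype.card {i // i ∈ F} = m := by
    rw [Fintype.card_coe]; exact card_filter_lt m hm
  set v : {i // i ∈ F} → EuclideanSpace ℂ (Fin N) :=
    fun i => hhh.eigenvectorBasis (σ'' i.1) with hv
  have hvon : Orthonormal ℂ v :=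
    hhh.eigenvectorBasis.orthonormal.comp _ (σ''.injective.comp Subtype.val_injective)
  have key : pSum μ'' m
      = ∑ i : {i // i ∈ F}, (inner ℂ (v i) (Matrix.toEuclideanLin (h + h') (v i)) : ℂ).re := by
    unfold pSum
    rw [← Finset.sum_attach F (fun i => μ'' i)]
    refine Finset.sum_congr rfl fun i _ => ?_
    rw [hσ'']
    exact (re_inner_eigenvector hhh (σ'' i.1)).symm
  have hsplit : ∀ x : EuclideanSpace ℂ (Fin N),
      (inner ℂ x (Matrix.toEuclideanLin (h + h') x) : ℂ).re
        = (inner ℂ x (Matrix.toEuclideanLin h x) : ℂ).re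
          + (inner ℂ x (Matrix.toEuclideanLin h' x) : ℂ).re := by
    intro x
    rw [map_add, LinearMap.add_apply, inner_add_right, Complex.add_re]
  rw [key]
  simp_rw [hsplit]
  rw [Finset.sum_add_distrib]
  have h1 := sum_re_inner_le hh hμa σ hσ v hvon (by rw [hcard]; exact hm)
  have h2 := sum_re_inner_le hh' hμ'a σ' hσ' v hvon (by rw [hcard]; exact hm)
  rw [hcard] at h1 h2
  exact add_le_add h1 h2

private lemma trace_eq_sum_eigs {N : ℕ} {A : Matrix (Fin N) (Fin N) ℂ} (hA : A.IsHermitian) :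
    A.trace = ∑ i, (hA.eigenvalues i : ℂ) := by
  have hu : (star (hA.eigenvectorUnitary : Matrix (Fin N) (Fin N) ℂ))
      * (hA.eigenvectorUnitary : Matrix (Fin N) (Fin N) ℂ) = 1 :=
    Matrix.mem_unitaryGroup_iff'.mp hA.eigenvectorUnitary.2
  conv_lhs => rw [hA.spectral_theorem]
  rw [Unitary.conjStarAlgAut_apply, Matrix.trace_mul_cycle, hu, Matrix.one_mul, Matrix.trace_diagonal]
  exact Finset.sum_congr rfl fun i _ => rfl

private lemma total_eq {N : ℕ} {h h' : Matrix (Fin N) (Fin N) ℂ}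
    (hh : h.IsHermitian) (hh' : h'.IsHermitian) (hhh : (h + h').IsHermitian)
    {μ μ' μ'' : Fin N → ℝ} (σ σ' σ'' : Equiv.Perm (Fin N))
    (hσ : μ = hh.eigenvalues ∘ σ) (hσ' : μ' = hh'.eigenvalues ∘ σ')
    (hσ'' : μ'' = hhh.eigenvalues ∘ σ'') :
    pSum μ'' N = pSum μ N + pSum μ' N := by
  rw [pSum_total, pSum_total, pSum_total]
  have e'' : ∑ i, μ'' i = ∑ i, hhh.eigenvalues i := by
    rw [hσ'']; exact Equiv.sum_comp σ'' _
  have e : ∑ i, μ i = ∑ i, hh.eigenvalues i := by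
    rw [hσ]; exact Equiv.sum_comp σ _
  have e' : ∑ i, μ' i = ∑ i, hh'.eigenvalues i := by
    rw [hσ']; exact Equiv.sum_comp σ' _
  have tr : (h + h').trace = h.trace + h'.trace := Matrix.trace_add h h'
  rw [trace_eq_sum_eigs hh, trace_eq_sum_eigs hh', trace_eq_sum_eigs hhh] at tr
  have htr := congrArg Complex.re tr
  simp only [Complex.add_re, Complex.re_sum, Complex.ofReal_re] at htr
  rw [e'', e, e']
  exact htr

private lemma chi_mono {N : ℕ} (χ : (Fin N → ℝ) → ℝ)
    (hadd : ∀ x y, χ (x + y) ≤ χ x + χ y)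
    (hhom : ∀ (c : ℝ) (x), χ (c • x) = |c| * χ x)
    (hsym : ∀ (σ : Equiv.Perm (Fin N)) (x), χ (x ∘ σ) = χ x)
    (x : Fin N → ℝ) (hx : Antitone x) :
    ∀ n (y : Fin N → ℝ), (∀ m, pSum x m ≤ pSum y m) → pSum x N = pSum y N →
      (Finset.univ.filter (fun i => x i ≠ y i)).card ≤ n → χ x ≤ χ y := by
  intro n
  induction n with
  | zero =>
    intro y hle htot hcount
    have hxy : x = y := by
      funext i
      by_contra hne
      have hmem : i ∈ Finset.univ.filter (fun i => x i ≠ y i) := by simp [hne]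
      rw [Finset.card_eq_zero.mp (Nat.le_zero.mp hcount)] at hmem
      exact absurd hmem (Finset.notMem_empty i)
    rw [hxy]
  | succ n ih =>
    intro y hle htot hcount
    by_cases hxy : x = y
    · rw [hxy]
    have hSgt : (Finset.univ.filter (fun i => x i < y i)).Nonempty := by
      by_contra hempty
      rw [Finset.not_nonempty_iff_eq_empty, Finset.filter_eq_empty_iff] at hempty
      apply hxy
      funext i
      have hzero : ∑ i, (x i - y i) = 0 := by
        rw [Finset.sum_sub_distrib, ← pSum_total, ← pSum_total, htot]; ring
      have hnonneg : ∀ i ∈ Finset.univ, (0:ℝ) ≤ x i - y i := fun i _ =>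
        sub_nonneg.mpr (le_of_not_gt (hempty (Finset.mem_univ i)))
      have := (Finset.sum_eq_zero_iff_of_nonneg hnonneg).mp hzero i (Finset.mem_univ i)
      linarith
    set j := (Finset.univ.filter (fun i => x i < y i)).max' hSgt with hjdef
    have hj : x j < y j := by
      have hm := Finset.mem_filter.mp
        ((Finset.univ.filter (fun i => x i < y i)).max'_mem hSgt)
      exact hm.2
    have hjmax : ∀ i, j < i → y i ≤ x i := by
      intro i hi
      by_contra hcon
      push_neg at hcon
      have : i ≤ j := Finset.le_max' _ i (by simp [hcon])
      exact absurd hi (not_lt.mpr this)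
    set G := Finset.univ.filter (fun i : Fin N => ¬ ((i : ℕ) < (j : ℕ) + 1)) with hG
    have hGmem : ∀ i : Fin N, i ∈ G ↔ j < i := by
      intro i
      simp only [hG, Finset.mem_filter, Finset.mem_univ, true_and, Fin.lt_def]
      omega
    have hGsum : ∑ i ∈ G, (x i - y i) = pSum y ((j:ℕ)+1) - pSum x ((j:ℕ)+1) := by
      have hxs := Finset.sum_filter_add_sum_filter_not Finset.univ
        (fun i : Fin N => (i:ℕ) < (j:ℕ)+1) x
      have hys := Finset.sum_filter_add_sum_filter_not Finset.univ
        (fun i : Fin N => (i:ℕ) < (j:ℕ)+1) y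
      have htotx := pSum_total x
      have htoty := pSum_total y
      rw [Finset.sum_sub_distrib]
      have hgx : ∑ i ∈ G, x i = (∑ i, x i) - pSum x ((j:ℕ)+1) := by
        rw [hG]; unfold pSum; linarith [hxs]
      have hgy : ∑ i ∈ G, y i = (∑ i, y i) - pSum y ((j:ℕ)+1) := by
        rw [hG]; unfold pSum; linarith [hys]
      rw [hgx, hgy, ← htotx, ← htoty, htot]
      ring
    have hGnonneg : ∀ i ∈ G, (0:ℝ) ≤ x i - y i := fun i hi =>
      sub_nonneg.mpr (hjmax i ((hGmem i).mp hi))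
    have hgap : 0 < pSum y ((j:ℕ)+1) - pSum x ((j:ℕ)+1) := by
      rw [pSum_succ x j, pSum_succ y j]
      have := hle (j:ℕ)
      linarith
    have hSk : (Finset.univ.filter (fun i => j < i ∧ y i < x i)).Nonempty := by
      by_contra hempty
      rw [Finset.not_nonempty_iff_eq_empty, Finset.filter_eq_empty_iff] at hempty
      have hnp : ∑ i ∈ G, (x i - y i) ≤ 0 := by
        apply Finset.sum_nonpos
        intro i hi
        have hji := (hGmem i).mp hi
        have hni : ¬ y i < x i := fun hc => (hempty (Finset.mem_univ i)) ⟨hji, hc⟩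
        linarith [le_of_not_gt hni]
      rw [hGsum] at hnp
      linarith
    set k := (Finset.univ.filter (fun i => j < i ∧ y i < x i)).min' hSk with hkdef
    have hkmem : j < k ∧ y k < x k := by
      have hm := Finset.mem_filter.mp
        ((Finset.univ.filter (fun i => j < i ∧ y i < x i)).min'_mem hSk)
      exact hm.2
    obtain ⟨hjk, hyk⟩ := hkmem
    have hkmin : ∀ i, j < i → y i < x i → k ≤ i := fun i h1 h2 =>
      Finset.min'_le _ i (by simp [h1, h2])
    have hbetween : ∀ i, j < i → i < k → x i = y i := by
      intro i h1 h2
      have hyx : y i ≤ x i := hjmax i h1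
      rcases eq_or_lt_of_le hyx with heq | hlt'
      · exact heq.symm
      · exact absurd h2 (not_lt.mpr (hkmin i h1 hlt'))
    set δ := min (y j - x j) (x k - y k) with hδdef
    have hδ1 : δ ≤ y j - x j := min_le_left _ _
    have hδ2 : δ ≤ x k - y k := min_le_right _ _
    have hδpos : 0 < δ := lt_min (by linarith) (by linarith)
    have hxjk : x k ≤ x j := hx (le_of_lt hjk)
    have hyjkpos : 0 < y j - y k := by linarith
    have hδle : δ ≤ y j - y k := by linarith
    set t := 1 - δ / (y j - y k) with htdef
    have ht0 : 0 ≤ t := by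
      have : δ / (y j - y k) ≤ 1 := (div_le_one hyjkpos).mpr hδle
      rw [htdef]; linarith
    have ht1 : t ≤ 1 := by
      have : 0 ≤ δ / (y j - y k) := div_nonneg (le_of_lt hδpos) (le_of_lt hyjkpos)
      rw [htdef]; linarith
    have hjkne : j ≠ k := ne_of_lt hjk
    set y2 := Function.update (Function.update y j (y j - δ)) k (y k + δ) with hy2
    have hy2j : y2 j = y j - δ := by
      rw [hy2, Function.update_of_ne hjkne, Function.update_self]
    have hy2k : y2 k = y k + δ := by rw [hy2, Function.update_self]
    have hy2i : ∀ i, i ≠ j → i ≠ k → y2 i = y i := by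
      intro i h1 h2
      rw [hy2, Function.update_of_ne h2, Function.update_of_ne h1]
    have hconv : y2 = t • y + (1 - t) • (y ∘ (Equiv.swap j k)) := by
      funext i
      have hne0 : y j - y k ≠ 0 := ne_of_gt hyjkpos
      by_cases h1 : i = j
      · subst h1
        simp only [Pi.add_apply, Pi.smul_apply, Function.comp_apply,
          Equiv.swap_apply_left, smul_eq_mul]
        rw [hy2j, htdef]
        field_simp
        ring
      by_cases h2 : i = k
      · subst h2
        simp only [Pi.add_apply, Pi.smul_apply, Function.comp_apply,
          Equiv.swap_apply_right, smul_eq_mul]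
        rw [hy2k, htdef]
        field_simp
        ring
      · simp only [Pi.add_apply, Pi.smul_apply, Function.comp_apply,
          Equiv.swap_apply_of_ne_of_ne h1 h2, smul_eq_mul]
        rw [hy2i i h1 h2]
        ring
    have hχy2 : χ y2 ≤ χ y := by
      rw [hconv]
      calc χ (t • y + (1 - t) • (y ∘ (Equiv.swap j k)))
          ≤ χ (t • y) + χ ((1 - t) • (y ∘ (Equiv.swap j k))) := hadd _ _
        _ = |t| * χ y + |1 - t| * χ (y ∘ (Equiv.swap j k)) := by rw [hhom, hhom]
        _ = t * χ y + (1 - t) * χ y := by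
            rw [abs_of_nonneg ht0, abs_of_nonneg (by linarith : (0:ℝ) ≤ 1 - t),
              hsym (Equiv.swap j k) y]
        _ = χ y := by ring
    have hy2sum : ∀ m : ℕ, pSum y2 m = pSum y m
        + (if (j:ℕ) < m then -δ else 0) + (if (k:ℕ) < m then δ else 0) := by
      intro m
      unfold pSum
      have hterm : ∀ i : Fin N,
          y2 i = y i + (if i = j then -δ else 0) + (if i = k then δ else 0) := by
        intro i
        by_cases h1 : i = j
        · subst h1; rw [hy2j, if_pos rfl, if_neg hjkne]; ring
        by_cases h2 : i = k
        · subst h2; rw [hy2k, if_neg (Ne.symm hjkne), if_pos rfl]; ring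
        · rw [hy2i i h1 h2, if_neg h1, if_neg h2]; ring
      rw [Finset.sum_congr rfl (fun i _ => hterm i), Finset.sum_add_distrib,
        Finset.sum_add_distrib, Finset.sum_ite_eq' _ j (fun _ => -δ),
        Finset.sum_ite_eq' _ k (fun _ => δ)]
      simp only [Finset.mem_filter, Finset.mem_univ, true_and]
    have hjklt : (j:ℕ) < (k:ℕ) := hjk
    have hle2 : ∀ m, pSum x m ≤ pSum y2 m := by
      intro m
      rw [hy2sum m]
      by_cases hm1 : (j:ℕ) < m
      · by_cases hm2 : (k:ℕ) < m
        · simp only [if_pos hm1, if_pos hm2]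
          have := hle m; linarith
        · simp only [if_pos hm1, if_neg hm2]
          have hjm : (j:ℕ) + 1 ≤ m := hm1
          have hmk : m ≤ (k:ℕ) := le_of_not_gt hm2
          have hsx := pSum_split x hjm
          have hsy := pSum_split y hjm
          have hmid : ∑ i ∈ Finset.univ.filter
                (fun i : Fin N => (j:ℕ)+1 ≤ (i:ℕ) ∧ (i:ℕ) < m), x i
              = ∑ i ∈ Finset.univ.filter
                (fun i : Fin N => (j:ℕ)+1 ≤ (i:ℕ) ∧ (i:ℕ) < m), y i := by
            refine Finset.sum_congr rfl fun i hi => ?_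
            simp only [Finset.mem_filter, Finset.mem_univ, true_and] at hi
            refine hbetween i ?_ ?_
            · rw [Fin.lt_def]; omega
            · rw [Fin.lt_def]; omega
          have hkG : k ∈ G := (hGmem k).mpr hjk
          have hsingle : x k - y k ≤ ∑ i ∈ G, (x i - y i) :=
            Finset.single_le_sum hGnonneg hkG
          rw [hsx, hsy, hmid]
          linarith [hGsum]
      · have hm2 : ¬ (k:ℕ) < m := by omega
        simp only [if_neg hm1, if_neg hm2]
        have := hle m; linarith
    have htot2 : pSum x N = pSum y2 N := by
      rw [hy2sum N, if_pos j.isLt, if_pos k.isLt, htot]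
      ring
    have hsub : Finset.univ.filter (fun i => x i ≠ y2 i)
        ⊆ Finset.univ.filter (fun i => x i ≠ y i) := by
      intro i hi
      simp only [Finset.mem_filter, Finset.mem_univ, true_and] at hi ⊢
      by_cases h1 : i = j
      · subst h1; exact ne_of_lt hj
      by_cases h2 : i = k
      · subst h2; exact (ne_of_lt hyk).symm
      · rw [← hy2i i h1 h2]; exact hi
    have hwit : ∃ w, w ∈ Finset.univ.filter (fun i => x i ≠ y i)
        ∧ w ∉ Finset.univ.filter (fun i => x i ≠ y2 i) := by
      rcases le_total (y j - x j) (x k - y k) with hcase | hcase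
      · refine ⟨j, by simp [ne_of_lt hj], ?_⟩
        have hj2 : y2 j = x j := by rw [hy2j, hδdef, min_eq_left hcase]; ring
        simp [hj2]
      · refine ⟨k, by simp [(ne_of_lt hyk).symm], ?_⟩
        have hk2 : y2 k = x k := by rw [hy2k, hδdef, min_eq_right hcase]; ring
        simp [hk2]
    obtain ⟨w, hw1, hw2⟩ := hwit
    have hcard2 : (Finset.univ.filter (fun i => x i ≠ y2 i)).card
        < (Finset.univ.filter (fun i => x i ≠ y i)).card :=
      Finset.card_lt_card ((Finset.ssubset_iff_of_subset hsub).mpr ⟨w, hw1, hw2⟩)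
    have hih : χ x ≤ χ y2 := ih y2 hle2 htot2 (by omega)
    linarith

private lemma pSum_of_ge {N : ℕ} (x : Fin N → ℝ) {m : ℕ} (hm : N ≤ m) :
    pSum x m = pSum x N := by
  unfold pSum
  rw [Finset.filter_true_of_mem (fun (i : Fin N) _ => lt_of_lt_of_le i.isLt hm),
    Finset.filter_true_of_mem (fun (i : Fin N) _ => i.isLt)]

end Aux

/-- Subadditivity of a symmetric norm applied to ordered spectra of Hermitian matrices. -/
theorem symmetric_norm_spectrum_subadditive
    (N : ℕ) (χ : (Fin N → ℝ) → ℝ)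
    (hadd : ∀ x y, χ (x + y) ≤ χ x + χ y)
    (hhom : ∀ (c : ℝ) (x), χ (c • x) = |c| * χ x)
    (hdef : ∀ x, χ x = 0 → x = 0)
    (hsym : ∀ (σ : Equiv.Perm (Fin N)) (x), χ (x ∘ σ) = χ x)
    (h h' : Matrix (Fin N) (Fin N) ℂ)
    (hh : h.IsHermitian) (hh' : h'.IsHermitian) (hhh : (h + h').IsHermitian)
    (μ μ' μ'' : Fin N → ℝ)
    (hμa : Antitone μ) (hμ'a : Antitone μ') (hμ''a : Antitone μ'')
    (hμ : ∃ σ : Equiv.Perm (Fin N), μ = hh.eigenvalues ∘ σ)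
    (hμ' : ∃ σ : Equiv.Perm (Fin N), μ' = hh'.eigenvalues ∘ σ)
    (hμ'' : ∃ σ : Equiv.Perm (Fin N), μ'' = hhh.eigenvalues ∘ σ) :
    χ μ'' ≤ χ μ + χ μ' := by
  obtain ⟨σ, hσ⟩ := hμ
  obtain ⟨σ', hσ'⟩ := hμ'
  obtain ⟨σ'', hσ''⟩ := hμ''
  have htot := total_eq hh hh' hhh σ σ' σ'' hσ hσ' hσ''
  have hle : ∀ m, pSum μ'' m ≤ pSum (μ + μ') m := by
    intro m
    rw [pSum_add]
    rcases le_or_gt m N with hm | hm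
    · exact kyfan_ineq hh hh' hhh hμa hμ'a σ σ' σ'' hσ hσ' hσ'' hm
    · rw [pSum_of_ge μ'' (le_of_lt hm), pSum_of_ge μ (le_of_lt hm),
        pSum_of_ge μ' (le_of_lt hm)]
      exact le_of_eq htot
  have htot2 : pSum μ'' N = pSum (μ + μ') N := by rw [pSum_add]; exact htot
  have h1 : χ μ'' ≤ χ (μ + μ') :=
    chi_mono χ hadd hhom hsym μ'' hμ''a _ (μ + μ') hle htot2 le_rfl
  exact le_trans h1 (hadd μ μ')
end

section
/- Ky Fan's inequality: for Hermitian N×N matrices h and h' and every 1 ≤ k ≤ N, the sum of the k largest eigenvalues of h + h' is at most the sum of the k largest eigenvalues of h plus the sum of the k largest eigenvalues of h'; moreover for k = N equality holds (trace additivity). -/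
open scoped ComplexOrder

lemma kyFan_card_aux (N k : ℕ) (hkN : k ≤ N) :
    (Finset.univ.filter (fun i : Fin N => (i : ℕ) < k)).card = k := by
  have : (Finset.univ.filter (fun i : Fin N => (i : ℕ) < k)) =
      (Finset.range k).attachFin (fun m hm => lt_of_lt_of_le (Finset.mem_range.mp hm) hkN) := by
    ext i
    simp [Finset.mem_attachFin]
  rw [this, Finset.card_attachFin, Finset.card_range]

lemma kyFan_numeric (N k : ℕ) (hk1 : 1 ≤ k) (hkN : k ≤ N) (μ d : Fin N → ℝ)
    (hμ : Antitone μ) (hd0 : ∀ i, 0 ≤ d i) (hd1 : ∀ i, d i ≤ 1)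
    (hds : ∑ i, d i = k) :
    ∑ i, μ i * d i ≤ ∑ i ∈ Finset.univ.filter (fun i : Fin N => (i : ℕ) < k), μ i := by
  set S := Finset.univ.filter (fun i : Fin N => (i : ℕ) < k) with hS
  have hkm : k - 1 < N := by omega
  set t : ℝ := μ ⟨k - 1, hkm⟩ with ht
  have hmem : ∀ i : Fin N, i ∈ S ↔ (i : ℕ) < k := by
    intro i; simp [hS]
  have h1 : ∀ i ∈ S, μ i * d i ≤ μ i + t * (d i - 1) := by
    intro i hi
    have hik : (i : ℕ) < k := (hmem i).mp hi
    have : t ≤ μ i := hμ (by simp [Fin.le_def]; omega)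
    nlinarith [hd1 i]
  have h2 : ∀ i ∈ Sᶜ, μ i * d i ≤ t * d i := by
    intro i hi
    have hik : ¬ (i : ℕ) < k := by
      intro hc; exact (Finset.mem_compl.mp hi) ((hmem i).mpr hc)
    have : μ i ≤ t := hμ (by simp [Fin.le_def]; omega)
    nlinarith [hd0 i]
  calc ∑ i, μ i * d i = ∑ i ∈ S, μ i * d i + ∑ i ∈ Sᶜ, μ i * d i :=
        (Finset.sum_add_sum_compl S _).symm
    _ ≤ ∑ i ∈ S, (μ i + t * (d i - 1)) + ∑ i ∈ Sᶜ, t * d i :=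
        add_le_add (Finset.sum_le_sum h1) (Finset.sum_le_sum h2)
    _ = ∑ i ∈ S, μ i + t * ((∑ i ∈ S, d i + ∑ i ∈ Sᶜ, d i) - S.card) := by
        rw [Finset.sum_add_distrib, ← Finset.mul_sum, ← Finset.mul_sum,
          Finset.sum_sub_distrib]
        simp [mul_sub, mul_add]
        ring
    _ = ∑ i ∈ S, μ i := by
        rw [Finset.sum_add_sum_compl S d, hds, hS, kyFan_card_aux N k hkN]
        simp

open Matrix in
lemma kyFan_diag_re_nonneg {N : ℕ} {M : Matrix (Fin N) (Fin N) ℂ} (hM : M.PosSemidef)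
    (i : Fin N) : 0 ≤ (M i i).re := by
  have := hM.re_dotProduct_nonneg (Pi.single i 1)
  simpa [dotProduct, Matrix.mulVec, Pi.single_apply, Finset.sum_ite_eq,
    dotProduct_single] using this

open Matrix in
lemma kyFan_trace_diagonal_mul {N : ℕ} (f : Fin N → ℂ) (M : Matrix (Fin N) (Fin N) ℂ) :
    (Matrix.diagonal f * M).trace = ∑ i, f i * M i i := by
  simp [Matrix.trace, Matrix.diag, Matrix.mul_apply, Matrix.diagonal_apply, Finset.sum_ite_eq,
    ite_mul]

open Matrix in
/-- trace of `A * Q` in the eigenbasis of `A`. -/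
lemma kyFan_trace_eq_sum {N : ℕ} {A : Matrix (Fin N) (Fin N) ℂ} (hA : A.IsHermitian)
    (Q : Matrix (Fin N) (Fin N) ℂ) :
    (A * Q).trace = ∑ i, (hA.eigenvalues i : ℂ) *
      (((hA.eigenvectorUnitary : Matrix (Fin N) (Fin N) ℂ))ᴴ * Q *
        (hA.eigenvectorUnitary : Matrix (Fin N) (Fin N) ℂ)) i i := by
  conv_lhs => rw [hA.spectral_theorem, Unitary.conjStarAlgAut_apply]
  rw [Matrix.star_eq_conjTranspose]
  simp only [Matrix.mul_assoc]
  rw [Matrix.trace_mul_comm]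
  simp only [Matrix.mul_assoc]
  rw [kyFan_trace_diagonal_mul]
  simp only [← Matrix.mul_assoc]
  rfl

open Matrix in
lemma kyFan_trace_le (N k : ℕ) (hk1 : 1 ≤ k) (hkN : k ≤ N)
    (A : Matrix (Fin N) (Fin N) ℂ) (hA : A.IsHermitian)
    (Q : Matrix (Fin N) (Fin N) ℂ) (hQ : Q.PosSemidef)
    (hQ1 : ((1 : Matrix (Fin N) (Fin N) ℂ) - Q).PosSemidef)
    (htr : (Q.trace).re = k)
    (μ : Fin N → ℝ) (hμa : Antitone μ) (σ : Equiv.Perm (Fin N))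
    (hμ : μ = hA.eigenvalues ∘ σ) :
    ((A * Q).trace).re ≤ ∑ i ∈ Finset.univ.filter (fun i : Fin N => (i : ℕ) < k), μ i := by
  set U : Matrix (Fin N) (Fin N) ℂ := (hA.eigenvectorUnitary : Matrix (Fin N) (Fin N) ℂ) with hU
  have hUmem := hA.eigenvectorUnitary.2
  have hUU : U * Uᴴ = 1 := by
    simpa [Matrix.star_eq_conjTranspose] using (Matrix.mem_unitaryGroup_iff).mp hUmem
  have hUU' : Uᴴ * U = 1 := by
    simpa [Matrix.star_eq_conjTranspose] using (Matrix.mem_unitaryGroup_iff').mp hUmem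
  set M : Matrix (Fin N) (Fin N) ℂ := Uᴴ * Q * U with hM
  have hMps : M.PosSemidef := hQ.conjTranspose_mul_mul_same U
  have hMps1 : ((1 : Matrix (Fin N) (Fin N) ℂ) - M).PosSemidef := by
    have : (1 : Matrix (Fin N) (Fin N) ℂ) - M = Uᴴ * (1 - Q) * U := by
      rw [Matrix.mul_sub, Matrix.sub_mul, Matrix.mul_one, hUU', hM]
    rw [this]
    exact hQ1.conjTranspose_mul_mul_same U
  have htrace : (A * Q).trace = ∑ i, (hA.eigenvalues i : ℂ) * M i i :=
    kyFan_trace_eq_sum hA Q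
  set c : Fin N → ℝ := fun i => (M i i).re with hc
  have hc0 : ∀ i, 0 ≤ c i := fun i => kyFan_diag_re_nonneg hMps i
  have hc1 : ∀ i, c i ≤ 1 := by
    intro i
    have := kyFan_diag_re_nonneg hMps1 i
    simp only [Matrix.sub_apply, Matrix.one_apply_eq, Complex.sub_re, Complex.one_re] at this
    simp [hc]; linarith
  have hcs : ∑ i, c i = k := by
    have h1 : M.trace = Q.trace := by
      rw [hM, Matrix.trace_mul_comm, ← Matrix.mul_assoc, hUU, Matrix.one_mul]
    have : (∑ i, c i) = (M.trace).re := by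
      simp [hc, Matrix.trace, Matrix.diag, Complex.re_sum]
    rw [this, h1, htr]
  have hre : ((A * Q).trace).re = ∑ i, hA.eigenvalues i * c i := by
    rw [htrace, Complex.re_sum]
    congr 1; ext i
    simp [hc, Complex.re_ofReal_mul]
  rw [hre]
  have hreindex : ∑ i, hA.eigenvalues i * c i = ∑ j, μ j * (c (σ j)) := by
    rw [← Equiv.sum_comp σ (fun i => hA.eigenvalues i * c i)]
    simp [hμ]
  rw [hreindex]
  exact kyFan_numeric N k hk1 hkN μ (fun j => c (σ j)) hμa (fun j => hc0 _) (fun j => hc1 _)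
    (by rw [Equiv.sum_comp σ c, hcs])

open Matrix in
lemma kyFan_trace_eq_sum_eigenvalues {N : ℕ} {A : Matrix (Fin N) (Fin N) ℂ}
    (hA : A.IsHermitian) : A.trace = ((∑ i, hA.eigenvalues i : ℝ) : ℂ) := by
  have := kyFan_trace_eq_sum hA (1 : Matrix (Fin N) (Fin N) ℂ)
  rw [Matrix.mul_one] at this
  rw [this]
  have hUmem := hA.eigenvectorUnitary.2
  have hUU' : ((hA.eigenvectorUnitary : Matrix (Fin N) (Fin N) ℂ))ᴴ *
      (hA.eigenvectorUnitary : Matrix (Fin N) (Fin N) ℂ) = 1 := by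
    simpa [Matrix.star_eq_conjTranspose] using (Matrix.mem_unitaryGroup_iff').mp hUmem
  rw [Matrix.mul_one, hUU']
  simp [Matrix.one_apply]

/-- Ky Fan's inequality: the sum of the `k` largest eigenvalues is subadditive,
with equality (trace additivity) for `k = N`. -/
theorem kyFan_inequality
    (N : ℕ) (h h' : Matrix (Fin N) (Fin N) ℂ)
    (hh : h.IsHermitian) (hh' : h'.IsHermitian) (hhh : (h + h').IsHermitian)
    (μ μ' μ'' : Fin N → ℝ)
    (hμa : Antitone μ) (hμ'a : Antitone μ') (hμ''a : Antitone μ'')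
    (hμ : ∃ σ : Equiv.Perm (Fin N), μ = hh.eigenvalues ∘ σ)
    (hμ' : ∃ σ : Equiv.Perm (Fin N), μ' = hh'.eigenvalues ∘ σ)
    (hμ'' : ∃ σ : Equiv.Perm (Fin N), μ'' = hhh.eigenvalues ∘ σ) :
    (∀ k : ℕ, 1 ≤ k → k ≤ N →
        ∑ i ∈ Finset.univ.filter (fun i : Fin N => (i : ℕ) < k), μ'' i ≤
          ∑ i ∈ Finset.univ.filter (fun i : Fin N => (i : ℕ) < k), μ i +
            ∑ i ∈ Finset.univ.filter (fun i : Fin N => (i : ℕ) < k), μ' i) ∧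
      ∑ i, μ'' i = ∑ i, μ i + ∑ i, μ' i := by
  open Matrix in
  obtain ⟨σ, hσ⟩ := hμ
  obtain ⟨σ', hσ'⟩ := hμ'
  obtain ⟨σ'', hσ''⟩ := hμ''
  constructor
  · intro k hk1 hkN
    -- the projection onto the top-k eigenspace of h + h'
    set W : Matrix (Fin N) (Fin N) ℂ :=
      (hhh.eigenvectorUnitary : Matrix (Fin N) (Fin N) ℂ) with hW
    have hWmem := hhh.eigenvectorUnitary.2
    have hWW : W * Wᴴ = 1 := by
      simpa [Matrix.star_eq_conjTranspose] using (Matrix.mem_unitaryGroup_iff).mp hWmem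
    have hWW' : Wᴴ * W = 1 := by
      simpa [Matrix.star_eq_conjTranspose] using (Matrix.mem_unitaryGroup_iff').mp hWmem
    set e : Fin N → ℝ := fun i => if ((σ''.symm i : Fin N) : ℕ) < k then 1 else 0 with he
    have he0 : ∀ i, 0 ≤ e i := by intro i; simp only [he]; positivity
    have he1 : ∀ i, e i ≤ 1 := by
      intro i; simp only [he]; split <;> norm_num
    set E : Matrix (Fin N) (Fin N) ℂ := Matrix.diagonal (fun i => (e i : ℂ)) with hE
    set Q : Matrix (Fin N) (Fin N) ℂ := W * E * Wᴴ with hQdef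
    have hEps : E.PosSemidef := Matrix.PosSemidef.diagonal (by
      intro i
      simpa using Complex.zero_le_real.mpr (he0 i))
    have hQps : Q.PosSemidef := hEps.mul_mul_conjTranspose_same W
    have hQ1ps : ((1 : Matrix (Fin N) (Fin N) ℂ) - Q).PosSemidef := by
      have hone : (1 : Matrix (Fin N) (Fin N) ℂ) - Q =
          W * Matrix.diagonal (fun i => ((1 - e i : ℝ) : ℂ)) * Wᴴ := by
        have : Matrix.diagonal (fun i : Fin N => ((1 - e i : ℝ) : ℂ)) = 1 - E := by
          rw [hE]
          ext i j
          by_cases hij : i = j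
          · subst hij; simp [Matrix.diagonal_apply_eq, Matrix.one_apply_eq]
          · simp [Matrix.diagonal_apply_ne _ hij, Matrix.one_apply_ne hij]
        rw [this, Matrix.mul_sub, Matrix.sub_mul, Matrix.mul_one, hWW, hQdef]
      rw [hone]
      refine (Matrix.PosSemidef.diagonal ?_).mul_mul_conjTranspose_same W
      intro i
      have h01 : (0:ℝ) ≤ 1 - e i := by linarith [he1 i]
      simpa using Complex.zero_le_real.mpr h01
    have hesum : ∑ i, e i = (k : ℝ) := by
      rw [← Equiv.sum_comp σ'' e]
      have : ∀ j : Fin N, e (σ'' j) = if (j : ℕ) < k then 1 else 0 := by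
        intro j; simp [he]
      simp only [this]
      rw [← Finset.sum_filter]
      simp [kyFan_card_aux N k hkN]
    have htr : (Q.trace).re = k := by
      have h1 : Q.trace = E.trace := by
        rw [hQdef, Matrix.trace_mul_comm, ← Matrix.mul_assoc, hWW', Matrix.one_mul]
      rw [h1, hE, Matrix.trace_diagonal]
      rw [← Complex.ofReal_sum, Complex.ofReal_re, hesum]
    -- value on h + h'
    have hval : (((h + h') * Q).trace).re
        = ∑ i ∈ Finset.univ.filter (fun i : Fin N => (i : ℕ) < k), μ'' i := by
      have hMQ : Wᴴ * Q * W = E := by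
        rw [hQdef]
        simp only [← Matrix.mul_assoc]
        rw [hWW', Matrix.one_mul, Matrix.mul_assoc, hWW', Matrix.mul_one]
      have := kyFan_trace_eq_sum hhh Q
      rw [← hW, hMQ] at this
      rw [this]
      have : ∀ i, ((hhh.eigenvalues i : ℂ) * E i i) =
          ((hhh.eigenvalues i * e i : ℝ) : ℂ) := by
        intro i
        simp [hE, Matrix.diagonal_apply_eq]
      simp only [this]
      rw [← Complex.ofReal_sum, Complex.ofReal_re]
      rw [← Equiv.sum_comp σ'' (fun i => hhh.eigenvalues i * e i)]
      have : ∀ j : Fin N, hhh.eigenvalues (σ'' j) * e (σ'' j)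
          = if (j : ℕ) < k then μ'' j else 0 := by
        intro j
        rw [hσ'']
        simp only [Function.comp_apply, he, Equiv.symm_apply_apply]
        split <;> simp
      simp only [this]
      rw [← Finset.sum_filter]
    -- split the trace
    have hsplit : (((h + h') * Q).trace).re = ((h * Q).trace).re + ((h' * Q).trace).re := by
      rw [Matrix.add_mul, Matrix.trace_add, Complex.add_re]
    rw [← hval, hsplit]
    exact add_le_add
      (kyFan_trace_le N k hk1 hkN h hh Q hQps hQ1ps htr μ hμa σ hσ)
      (kyFan_trace_le N k hk1 hkN h' hh' Q hQps hQ1ps htr μ' hμ'a σ' hσ')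
  · have e1 : ∑ i, μ'' i = ∑ i, hhh.eigenvalues i := by
      rw [hσ'']; exact Equiv.sum_comp σ'' hhh.eigenvalues
    have e2 : ∑ i, μ i = ∑ i, hh.eigenvalues i := by
      rw [hσ]; exact Equiv.sum_comp σ hh.eigenvalues
    have e3 : ∑ i, μ' i = ∑ i, hh'.eigenvalues i := by
      rw [hσ']; exact Equiv.sum_comp σ' hh'.eigenvalues
    have := kyFan_trace_eq_sum_eigenvalues hhh
    rw [Matrix.trace_add, kyFan_trace_eq_sum_eigenvalues hh,
      kyFan_trace_eq_sum_eigenvalues hh'] at this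
    rw [e1, e2, e3]
    exact_mod_cast this.symm
end

section
/- Let F : ℝ^n → ℝ be convex and Lipschitz. If along every nonzero direction v ∈ ℝ^n the slope at infinity lim_{t→∞} F(x_0 + tv)/t is strictly positive, then F is coercive: there exist δ, C > 0 such that F(x) ≥ δ‖x − x_0‖ − C for all x ∈ ℝ^n. -/
open Filter

private lemma seg_ineq {E : Type*} [NormedAddCommGroup E] [NormedSpace ℝ E]
    {F : E → ℝ} (hF : ConvexOn ℝ Set.univ F) (x₀ v : E) {s t : ℝ}
    (hs : 0 ≤ s) (hst : s ≤ t) (ht : 0 < t) :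
    t * (F (x₀ + s • v) - F x₀) ≤ s * (F (x₀ + t • v) - F x₀) := by
  have hpt : (1 - s/t) • x₀ + (s/t) • (x₀ + t • v) = x₀ + s • v := by
    have h1 : (s/t) • (t • v) = s • v := by
      rw [smul_smul, div_mul_cancel₀ _ ht.ne']
    rw [smul_add, h1, sub_smul, one_smul]
    abel
  have h : F (x₀ + s • v) ≤ (1 - s/t) * F x₀ + (s/t) * F (x₀ + t • v) := by
    have h2 := hF.2 (Set.mem_univ x₀) (Set.mem_univ (x₀ + t • v))
      (show (0:ℝ) ≤ 1 - s/t by rw [sub_nonneg, div_le_one ht]; exact hst)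
      (show (0:ℝ) ≤ s/t by positivity)
      (show (1 - s/t) + s/t = 1 by ring)
    rw [hpt] at h2
    simpa [smul_eq_mul] using h2
  have h' := mul_le_mul_of_nonneg_left h ht.le
  have e1 : t * ((1 - s/t) * F x₀ + (s/t) * F (x₀ + t • v))
      = (t - s) * F x₀ + s * F (x₀ + t • v) := by
    field_simp
  rw [e1] at h'
  linarith

/-- If a convex Lipschitz function on `ℝⁿ` has strictly positive slope at
infinity along every nonzero direction, then it is coercive. -/
theorem coercive_of_positive_slopes
    (n : ℕ) (F : EuclideanSpace ℝ (Fin n) → ℝ) (K : NNReal)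
    (hF : ConvexOn ℝ Set.univ F) (hlip : LipschitzWith K F)
    (x₀ : EuclideanSpace ℝ (Fin n))
    (hslope : ∀ v : EuclideanSpace ℝ (Fin n), v ≠ 0 →
      ∃ L : ℝ, 0 < L ∧
        Tendsto (fun t : ℝ => F (x₀ + t • v) / t) atTop (nhds L)) :
    ∃ δ C : ℝ, 0 < δ ∧ 0 < C ∧ ∀ x, δ * ‖x - x₀‖ - C ≤ F x := by
  classical
  -- Step 1: for each unit direction, a time and a positive slope witness
  have hstep : ∀ v : EuclideanSpace ℝ (Fin n), ‖v‖ = 1 →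
      ∃ ε t₀ : ℝ, 0 < ε ∧ 1 ≤ t₀ ∧ ε * t₀ < F (x₀ + t₀ • v) - F x₀ := by
    intro v hv
    have hv0 : v ≠ 0 := by intro h; rw [h, norm_zero] at hv; norm_num at hv
    obtain ⟨L, hL, htend⟩ := hslope v hv0
    have h0 : Tendsto (fun t : ℝ => F x₀ / t) atTop (nhds 0) :=
      tendsto_const_nhds.div_atTop tendsto_id
    have htend' : Tendsto (fun t : ℝ => (F (x₀ + t • v) - F x₀) / t) atTop
        (nhds L) := by
      have := htend.sub h0
      simpa [sub_div] using this
    have hev : ∀ᶠ t in atTop, L/2 < (F (x₀ + t • v) - F x₀) / t :=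
      htend'.eventually (eventually_gt_nhds (by linarith))
    obtain ⟨t₀, h1, h2⟩ := (hev.and (eventually_ge_atTop 1)).exists
    have ht₀ : (0:ℝ) < t₀ := lt_of_lt_of_le one_pos h2
    refine ⟨L/4, t₀, by linarith, h2, ?_⟩
    have h3 := (lt_div_iff₀ ht₀).mp h1
    nlinarith [mul_pos hL ht₀]
  choose! εf tf hε htf hval using hstep
  -- Step 2: compactness of the sphere
  set S := Metric.sphere (0 : EuclideanSpace ℝ (Fin n)) 1 with hS
  have hSc : IsCompact S := isCompact_sphere 0 1
  have hcont : Continuous F := hlip.continuous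
  have hnorm : ∀ i : S, ‖(i : EuclideanSpace ℝ (Fin n))‖ = 1 := fun i =>
    mem_sphere_zero_iff_norm.mp i.2
  have hUopen : ∀ i : S,
      IsOpen {w : EuclideanSpace ℝ (Fin n) |
        εf i * tf i < F (x₀ + tf i • w) - F x₀} := by
    intro i
    apply isOpen_lt continuous_const
    exact ((hcont.comp (continuous_const.add (continuous_const_smul _))).sub
      continuous_const)
  have hcover : S ⊆ ⋃ i : S, {w : EuclideanSpace ℝ (Fin n) |
      εf i * tf i < F (x₀ + tf i • w) - F x₀} := by
    intro w hw
    exact Set.mem_iUnion.2 ⟨⟨w, hw⟩, hval w (mem_sphere_zero_iff_norm.mp hw)⟩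
  obtain ⟨fs, hfs⟩ := hSc.elim_finite_subcover _ hUopen hcover
  -- Step 3: uniform ε and T
  set εs : Finset ℝ := insert 1 (fs.image fun i => εf i.1) with hεs
  set Ts : Finset ℝ := insert 1 (fs.image fun i => tf i.1) with hTs
  have hεne : εs.Nonempty := ⟨1, Finset.mem_insert_self _ _⟩
  have hTne : Ts.Nonempty := ⟨1, Finset.mem_insert_self _ _⟩
  set ε := εs.min' hεne with hεdef
  set T := Ts.max' hTne with hTdef
  have hεpos : 0 < ε := by
    rw [hεdef, Finset.lt_min'_iff]
    intro y hy
    rcases Finset.mem_insert.mp hy with h | h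
    · rw [h]; norm_num
    · obtain ⟨i, hi, rfl⟩ := Finset.mem_image.mp h
      exact hε i.1 (hnorm i)
  have hT1 : (1:ℝ) ≤ T := Finset.le_max' _ _ (Finset.mem_insert_self _ _)
  have hTpos : (0:ℝ) < T := lt_of_lt_of_le one_pos hT1
  -- key uniform bound on the sphere
  have key : ∀ v : EuclideanSpace ℝ (Fin n), ‖v‖ = 1 →
      ε * T ≤ F (x₀ + T • v) - F x₀ := by
    intro v hv
    have hvS : v ∈ S := mem_sphere_zero_iff_norm.mpr hv
    obtain ⟨i, hi⟩ := Set.mem_iUnion.mp (hfs hvS)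
    obtain ⟨himem, hiv⟩ := Set.mem_iUnion.mp hi
    have hivS : εf i * tf i < F (x₀ + tf i • v) - F x₀ := hiv
    have hti1 : (1:ℝ) ≤ tf i := htf i (hnorm i)
    have htipos : (0:ℝ) < tf i := lt_of_lt_of_le one_pos hti1
    have htiT : tf i.1 ≤ T :=
      Finset.le_max' Ts _ (Finset.mem_insert_of_mem
        (Finset.mem_image.mpr ⟨i, himem, rfl⟩))
    have hεi : ε ≤ εf i.1 :=
      Finset.min'_le εs _ (Finset.mem_insert_of_mem
        (Finset.mem_image.mpr ⟨i, himem, rfl⟩))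
    have hseg := seg_ineq hF x₀ v htipos.le htiT hTpos
    have hA : tf i * (εf i * T) < tf i * (F (x₀ + T • v) - F x₀) := by
      nlinarith [mul_lt_mul_of_pos_left hivS hTpos]
    have hB : εf i * T < F (x₀ + T • v) - F x₀ := (mul_lt_mul_iff_right₀ htipos).mp hA
    nlinarith [mul_le_mul_of_nonneg_right hεi hTpos.le]
  -- Step 4: conclude
  refine ⟨ε, ε * T + K * T + |F x₀| + 1, hεpos, by positivity, ?_⟩
  intro x
  have hK0 : (0:ℝ) ≤ K := K.coe_nonneg
  rcases le_or_gt ‖x - x₀‖ T with hle | hgt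
  · have hd := hlip.dist_le_mul x x₀
    rw [Real.dist_eq, dist_eq_norm] at hd
    have h1 : -(K * ‖x - x₀‖) ≤ F x - F x₀ := neg_le_of_abs_le hd
    have h2 : K * ‖x - x₀‖ ≤ K * T := by
      apply mul_le_mul_of_nonneg_left hle hK0
    have h3 : ε * ‖x - x₀‖ ≤ ε * T := mul_le_mul_of_nonneg_left hle hεpos.le
    have h4 : -|F x₀| ≤ F x₀ := neg_abs_le _
    linarith
  · set r := ‖x - x₀‖ with hr
    have hrpos : (0:ℝ) < r := lt_trans hTpos hgt
    set v := r⁻¹ • (x - x₀) with hv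
    have hvnorm : ‖v‖ = 1 := by
      rw [hv, norm_smul, norm_inv, Real.norm_eq_abs, abs_of_pos hrpos, ← hr,
        inv_mul_cancel₀ hrpos.ne']
    have hxv : x₀ + r • v = x := by
      rw [hv, smul_smul, mul_inv_cancel₀ hrpos.ne', one_smul]
      abel
    have hkey := key v hvnorm
    have hseg := seg_ineq hF x₀ v hTpos.le hgt.le hrpos
    rw [hxv] at hseg
    have h4 : -|F x₀| ≤ F x₀ := neg_abs_le _
    have h5 : ε * r ≤ F x - F x₀ := by
      have h6 : T * (ε * r) ≤ T * (F x - F x₀) := by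
        nlinarith [mul_le_mul_of_nonneg_left hkey hrpos.le]
      exact le_of_mul_le_mul_left h6 hTpos
    have h7 : 0 ≤ ε * T := mul_nonneg hεpos.le hTpos.le
    have h8 : 0 ≤ (K : ℝ) * T := mul_nonneg hK0 hTpos.le
    linarith
end

section
/- Let F : ℝ^n → ℝ be convex, Lipschitz, and suppose F admits a unique minimizer. Then F is coercive: there exist δ, C > 0 with F(x) ≥ δ‖x − x_0‖ − C for all x, where x_0 is the minimizer. -/
/-- A convex Lipschitz function on `ℝⁿ` with a unique minimizer is coercive. -/
theorem coercive_of_unique_minimizer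
    (n : ℕ) (F : EuclideanSpace ℝ (Fin n) → ℝ) (K : NNReal)
    (hF : ConvexOn ℝ Set.univ F) (hlip : LipschitzWith K F)
    (x₀ : EuclideanSpace ℝ (Fin n))
    (hmin : ∀ y, F x₀ ≤ F y)
    (huniq : ∀ y, (∀ z, F y ≤ F z) → y = x₀) :
    ∃ δ C : ℝ, 0 < δ ∧ 0 < C ∧ ∀ x, δ * ‖x - x₀‖ - C ≤ F x := by
  rcases Nat.eq_zero_or_pos n with hn | hn
  · subst hn
    refine ⟨1, |F x₀| + 1, one_pos, by positivity, fun x => ?_⟩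
    have hx : x = x₀ := Subsingleton.elim _ _
    rw [hx]
    simp only [sub_self, norm_zero, mul_zero, zero_sub]
    have := neg_abs_le (F x₀)
    linarith
  · haveI : Nontrivial (EuclideanSpace ℝ (Fin n)) :=
      Module.nontrivial_of_finrank_pos (R := ℝ)
        (by rw [finrank_euclideanSpace_fin]; exact hn)
    have hsph : (Metric.sphere x₀ (1:ℝ)).Nonempty :=
      NormedSpace.sphere_nonempty.mpr zero_le_one
    obtain ⟨y, hy, hymin⟩ := (isCompact_sphere x₀ 1).exists_isMinOn hsph
      hlip.continuous.continuousOn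
    have hy1 : ‖y - x₀‖ = 1 := by simpa [dist_eq_norm] using hy
    have hyne : y ≠ x₀ := by
      intro h; rw [h] at hy1; simp at hy1
    have hδ : 0 < F y - F x₀ := by
      rcases lt_or_eq_of_le (hmin y) with h | h
      · linarith
      · exfalso; exact hyne (huniq y (fun z => h ▸ hmin z))
    set δ := F y - F x₀ with hδdef
    refine ⟨δ, δ + |F x₀| + 1, hδ, by positivity, fun x => ?_⟩
    set r := ‖x - x₀‖ with hrdef
    have hr0 : 0 ≤ r := norm_nonneg _
    rcases le_or_gt 1 r with h1 | h1
    · have hrpos : 0 < r := lt_of_lt_of_le one_pos h1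
      set z := x₀ + r⁻¹ • (x - x₀) with hzdef
      have hz : z ∈ Metric.sphere x₀ (1:ℝ) := by
        simp only [Metric.mem_sphere, dist_eq_norm, hzdef, add_sub_cancel_left,
          norm_smul, norm_inv, Real.norm_eq_abs, abs_of_pos hrpos]
        exact inv_mul_cancel₀ (ne_of_gt hrpos)
      have hzcomb : z = (1 - r⁻¹) • x₀ + r⁻¹ • x := by
        rw [hzdef]; module
      have hconv : F z ≤ (1 - r⁻¹) * F x₀ + r⁻¹ * F x := by
        rw [hzcomb]
        exact hF.2 (Set.mem_univ x₀) (Set.mem_univ x)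
          (by have : r⁻¹ ≤ 1 := inv_le_one_of_one_le₀ h1; linarith)
          (by positivity) (by ring)
      have hFy : F y ≤ F z := hymin hz
      have hkey : F y - F x₀ ≤ r⁻¹ * (F x - F x₀) := by linarith
      have hinv : r * r⁻¹ = 1 := mul_inv_cancel₀ (ne_of_gt hrpos)
      have hmul := mul_le_mul_of_nonneg_left hkey hr0
      have h2 : r * (r⁻¹ * (F x - F x₀)) = F x - F x₀ := by
        rw [← mul_assoc, hinv, one_mul]
      rw [h2] at hmul
      have habs := neg_abs_le (F x₀)
      nlinarith [hmul, habs, hδdef]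
    · have : δ * r ≤ δ := by nlinarith
      have habs := neg_abs_le (F x₀)
      have := hmin x
      linarith
end

section
/- Let (u_t)_{t∈[a,b]} be a family of functions X → ℝ on a set X such that t ↦ u_t(x) is convex for each x, and assume the maximality (comparison) property: for any family (v_t) with t ↦ v_t(x) convex and lim_{t→a} v_t ≤ u_a, lim_{t→b} v_t ≤ u_b pointwise, one has v_t ≤ u_t for t ∈ (a,b). If m := sup_X(u_b − u_a) is finite, then sup_X(u_t − u_a) = m(t−a)/(b−a) for all t ∈ [a,b]. -/
/-- Abstract version of Darvas' lemma: along a maximal family of functions with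
convex time-slices, the sup `sup_X (u_t − u_a)` is affine in `t`. -/
theorem sup_affine_along_maximal_family
    {X : Type*} [Nonempty X] (a b : ℝ) (hab : a < b)
    (u : ℝ → X → ℝ)
    (hconv : ∀ x, ConvexOn ℝ (Set.Icc a b) (fun t => u t x))
    (hmax : ∀ v : ℝ → X → ℝ,
      (∀ x, ConvexOn ℝ (Set.Icc a b) (fun t => v t x)) →
      (∀ x, v a x ≤ u a x) → (∀ x, v b x ≤ u b x) →
      ∀ t ∈ Set.Ioo a b, ∀ x, v t x ≤ u t x)
    (m : ℝ) (hm : IsLUB (Set.range fun x => u b x - u a x) m) :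
    ∀ t ∈ Set.Icc a b,
      sSup (Set.range fun x => u t x - u a x) = m * (t - a) / (b - a) := by
  have hba : b - a ≠ 0 := sub_ne_zero.2 hab.ne'
  set k : ℝ := m / (b - a) with hk
  have hmk : m = k * (b - a) := by rw [hk]; field_simp
  have hub : ∀ x, u b x - u a x ≤ m := fun x => hm.1 ⟨x, rfl⟩
  intro t ht
  rcases eq_or_lt_of_le ht.1 with rfl | hat
  · simp [sub_self, Set.range_const]
  rcases eq_or_lt_of_le ht.2 with rfl | htb
  · rw [hm.csSup_eq (Set.range_nonempty _)]
    field_simp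
  have htIoo : t ∈ Set.Ioo a b := ⟨hat, htb⟩
  -- the comparison subgeodesic
  set v : ℝ → X → ℝ := fun s x => u b x + (s - b) * k with hv
  have hvconv : ∀ x, ConvexOn ℝ (Set.Icc a b) (fun s => v s x) := by
    intro x
    refine ⟨convex_Icc a b, ?_⟩
    intro x₁ _ x₂ _ p q hp hq hpq
    simp only [hv, smul_eq_mul]
    apply le_of_eq
    linear_combination (u b x - b * k) * hpq.symm
  have hva : ∀ x, v a x ≤ u a x := by
    intro x
    have h := hub x
    simp only [hv]
    have : (a - b) * k = -m := by rw [hmk]; ring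
    linarith
  have hvb : ∀ x, v b x ≤ u b x := by intro x; simp [hv]
  have hcomp := hmax v hvconv hva hvb t htIoo
  -- upper bound from convexity of u in t
  have hupper : ∀ x, u t x - u a x ≤ m * (t - a) / (b - a) := by
    intro x
    have hτ : (0:ℝ) ≤ (b - t) / (b - a) :=
      div_nonneg (by linarith) (by linarith)
    have hσ : (0:ℝ) ≤ (t - a) / (b - a) :=
      div_nonneg (by linarith) (by linarith)
    have hsum : (b - t) / (b - a) + (t - a) / (b - a) = 1 := by
      field_simp; ring
    have key := (hconv x).2 (Set.left_mem_Icc.2 hab.le)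
      (Set.right_mem_Icc.2 hab.le) hτ hσ hsum
    simp only [smul_eq_mul] at key
    have hteq : (b - t) / (b - a) * a + (t - a) / (b - a) * b = t := by
      field_simp; ring
    rw [hteq] at key
    have hτσ : (b - t) / (b - a) = 1 - (t - a) / (b - a) := by linarith
    rw [hτσ] at key
    have expand : (1 - (t - a) / (b - a)) * u a x + (t - a) / (b - a) * u b x
        = u a x + (t - a) / (b - a) * (u b x - u a x) := by ring
    rw [expand] at key
    have h2 : (t - a) / (b - a) * (u b x - u a x) ≤ (t - a) / (b - a) * m :=
      mul_le_mul_of_nonneg_left (hub x) hσ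
    have h3 : m * (t - a) / (b - a) = (t - a) / (b - a) * m := by ring
    rw [h3]
    linarith
  refine le_antisymm (csSup_le (Set.range_nonempty _) ?_) ?_
  · rintro y ⟨x, rfl⟩; exact hupper x
  · have hbdd : BddAbove (Set.range fun x => u t x - u a x) :=
      ⟨m * (t - a) / (b - a), by rintro y ⟨x, rfl⟩; exact hupper x⟩
    have hle : ∀ c, c ∈ upperBounds (Set.range fun x => u t x - u a x) →
        m * (t - a) / (b - a) ≤ c := by
      intro c hc
      have hmc : m ≤ c + (b - t) * k := by
        refine hm.2 ?_
        rintro y ⟨x, rfl⟩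
        have h1 := hcomp x
        have h2 : u t x - u a x ≤ c := hc ⟨x, rfl⟩
        simp only [hv] at h1
        have h3 : (t - b) * k = -((b - t) * k) := by ring
        show u b x - u a x ≤ c + (b - t) * k
        linarith
      have heq : m * (t - a) / (b - a) = k * (t - a) := by
        rw [hk]; field_simp
      have h4 : k * (b - a) - (b - t) * k = k * (t - a) := by ring
      rw [heq]
      linarith [hmk.le, hmc]
    exact hle _ (fun y hy => le_csSup hbdd hy)
end
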